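/- arXiv:2305.14063 — 3 statements merged into one kernel-verified Lean document; each statement's English description precedes it below -/
import Mathlib

section
/- Let E and Ê be subspaces of a real inner product space H consisting of L²-type vectors, and define δ_b(E, Ê) = sup over unit vectors v ∈ E of the distance from v to Ê, and δ̄_b(E, Ê) = sup over unit vectors v ∈ E of the infimum of ‖v − v̂‖ over unit vectors v̂ ∈ Ê. If δ_b(E, Ê) ≤ 1, then δ̄_b(E, Ê)² ≤ 2 − 2√(1 − δ_b(E, Ê)²). -/
open scoped RealInnerProductSpace

theorem stmt_3 {H : Type*} [NormedAddCommGroup H] [InnerProductSpace ℝ H]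
    (E F : Submodule ℝ H) [FiniteDimensional ℝ F] (hE : E ≠ ⊥) (hF : F ≠ ⊥)
    (δb δb' : ℝ)
    (hδb : δb = ⨆ v : {v : H // v ∈ E ∧ ‖v‖ = 1}, ⨅ w : F, ‖(v : H) - (w : H)‖)
    (hδb' : δb' = ⨆ v : {v : H // v ∈ E ∧ ‖v‖ = 1},
      ⨅ w : {w : H // w ∈ F ∧ ‖w‖ = 1}, ‖(v : H) - (w : H)‖)
    (h1 : δb ≤ 1) :
    δb' ^ 2 ≤ 2 - 2 * Real.sqrt (1 - δb ^ 2) := by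
  classical
  -- unit vectors in E and F
  obtain ⟨e0, he0E, he0⟩ := Submodule.exists_mem_ne_zero_of_ne_bot hE
  obtain ⟨f0, hf0F, hf0⟩ := Submodule.exists_mem_ne_zero_of_ne_bot hF
  set v0 : {v : H // v ∈ E ∧ ‖v‖ = 1} :=
    ⟨‖e0‖⁻¹ • e0, E.smul_mem _ he0E, by
      rw [norm_smul, norm_inv, norm_norm, inv_mul_cancel₀ (norm_ne_zero_iff.2 he0)]⟩
  set w0 : {w : H // w ∈ F ∧ ‖w‖ = 1} :=
    ⟨‖f0‖⁻¹ • f0, F.smul_mem _ hf0F, by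
      rw [norm_smul, norm_inv, norm_norm, inv_mul_cancel₀ (norm_ne_zero_iff.2 hf0)]⟩
  set A : ℝ := 2 - 2 * Real.sqrt (1 - δb ^ 2) with hA
  have hsqrt1 : Real.sqrt (1 - δb ^ 2) ≤ 1 := by
    calc Real.sqrt (1 - δb ^ 2) ≤ Real.sqrt 1 := Real.sqrt_le_sqrt (by nlinarith [sq_nonneg δb])
    _ = 1 := Real.sqrt_one
  have hA0 : 0 ≤ A := by simp only [hA]; linarith
  -- dist to F as iInf, bounded family
  have hbddb : ∀ v : {v : H // v ∈ E ∧ ‖v‖ = 1}, BddBelow (Set.range fun w : F => ‖(v : H) - (w : H)‖) :=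
    fun v => ⟨0, by rintro x ⟨w, rfl⟩; exact norm_nonneg _⟩
  have hle1 : ∀ v : {v : H // v ∈ E ∧ ‖v‖ = 1}, (⨅ w : F, ‖(v : H) - (w : H)‖) ≤ 1 := by
    intro v
    refine ciInf_le_of_le (hbddb v) (0 : F) ?_
    simp [v.2.2]
  have hbdda : BddAbove (Set.range fun v : {v : H // v ∈ E ∧ ‖v‖ = 1} =>
      ⨅ w : F, ‖(v : H) - (w : H)‖) := ⟨1, by rintro x ⟨v, rfl⟩; exact hle1 v⟩
  have hdle : ∀ v : {v : H // v ∈ E ∧ ‖v‖ = 1}, (⨅ w : F, ‖(v : H) - (w : H)‖) ≤ δb := by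
    intro v; rw [hδb]; exact le_ciSup hbdda v
  have hd0 : ∀ v : {v : H // v ∈ E ∧ ‖v‖ = 1}, 0 ≤ ⨅ w : F, ‖(v : H) - (w : H)‖ :=
    fun v => le_ciInf fun w => norm_nonneg _
  have hδb0 : 0 ≤ δb := le_trans (hd0 v0) (hdle v0)
  -- key: for each unit v there is a unit w in F with sqrt(1-δb²) ≤ ⟪v,w⟫
  have key : ∀ v : {v : H // v ∈ E ∧ ‖v‖ = 1},
      ∃ w : {w : H // w ∈ F ∧ ‖w‖ = 1}, Real.sqrt (1 - δb ^ 2) ≤ ⟪(v : H), (w : H)⟫ := by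
    intro v
    set P : H := (Submodule.orthogonalProjectionOnto F (v : H) : H) with hP
    have hPmem : P ∈ F := (Submodule.orthogonalProjectionOnto F (v : H)).2
    have hinner : ⟪(v : H) - P, P⟫ = 0 :=
      Submodule.starProjection_inner_eq_zero (K := F) (v : H) P hPmem
    have hpyth : ‖(v : H)‖ ^ 2 = ‖(v : H) - P‖ ^ 2 + ‖P‖ ^ 2 := by
      have := norm_add_sq_real ((v : H) - P) P
      rw [sub_add_cancel, hinner] at this
      linarith
    have hdist : ‖(v : H) - P‖ = ⨅ w : F, ‖(v : H) - (w : H)‖ :=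
      Submodule.starProjection_minimal (U := F) (v : H)
    have hdsq : ‖(v : H) - P‖ ^ 2 ≤ δb ^ 2 := by
      have h := hdle v
      rw [← hdist] at h
      exact pow_le_pow_left₀ (norm_nonneg _) h 2
    have hPge : 1 - δb ^ 2 ≤ ‖P‖ ^ 2 := by
      have hv1 : ‖(v : H)‖ = 1 := v.2.2
      rw [hv1] at hpyth; nlinarith
    by_cases hP0 : P = 0
    · -- then sqrt(1-δb²) = 0; pick ±w0
      have h0 : Real.sqrt (1 - δb ^ 2) = 0 := by
        rw [hP0, norm_zero] at hPge
        exact Real.sqrt_eq_zero'.2 (by nlinarith)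
      rcases le_or_gt 0 (⟪(v : H), (w0 : H)⟫) with h | h
      · exact ⟨w0, by rw [h0]; exact h⟩
      · refine ⟨⟨-(w0 : H), F.neg_mem w0.2.1, by rw [norm_neg]; exact w0.2.2⟩, ?_⟩
        rw [h0]
        simp only [inner_neg_right]
        linarith
    · have hPn : 0 < ‖P‖ := norm_pos_iff.2 hP0
      refine ⟨⟨‖P‖⁻¹ • P, F.smul_mem _ hPmem, by
        rw [norm_smul, norm_inv, norm_norm, inv_mul_cancel₀ hPn.ne']⟩, ?_⟩
      have hvP : ⟪(v : H), P⟫ = ‖P‖ ^ 2 := by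
        have := hinner
        rw [inner_sub_left] at this
        rw [real_inner_self_eq_norm_sq] at this
        linarith
      simp only [real_inner_smul_right, hvP]
      have : ‖P‖⁻¹ * ‖P‖ ^ 2 = ‖P‖ := by field_simp
      rw [this]
      calc Real.sqrt (1 - δb ^ 2) ≤ Real.sqrt (‖P‖ ^ 2) := Real.sqrt_le_sqrt hPge
        _ = ‖P‖ := Real.sqrt_sq (norm_nonneg _)
  haveI : Nonempty {v : H // v ∈ E ∧ ‖v‖ = 1} := ⟨v0⟩
  haveI : Nonempty {w : H // w ∈ F ∧ ‖w‖ = 1} := ⟨w0⟩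
  -- bound δb' by sqrt A
  have hbddb' : ∀ v : {v : H // v ∈ E ∧ ‖v‖ = 1},
      BddBelow (Set.range fun w : {w : H // w ∈ F ∧ ‖w‖ = 1} => ‖(v : H) - (w : H)‖) :=
    fun v => ⟨0, by rintro x ⟨w, rfl⟩; exact norm_nonneg _⟩
  have hupper : ∀ v : {v : H // v ∈ E ∧ ‖v‖ = 1},
      (⨅ w : {w : H // w ∈ F ∧ ‖w‖ = 1}, ‖(v : H) - (w : H)‖) ≤ Real.sqrt A := by
    intro v
    obtain ⟨w, hw⟩ := key v
    refine ciInf_le_of_le (hbddb' v) w ?_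
    have hsq : ‖(v : H) - (w : H)‖ ^ 2 ≤ A := by
      have := norm_sub_sq_real (v : H) (w : H)
      rw [v.2.2, w.2.2] at this
      simp only [hA]
      nlinarith
    calc ‖(v : H) - (w : H)‖ = Real.sqrt (‖(v : H) - (w : H)‖ ^ 2) :=
          (Real.sqrt_sq (norm_nonneg _)).symm
      _ ≤ Real.sqrt A := Real.sqrt_le_sqrt hsq
  have hδb'le : δb' ≤ Real.sqrt A := by
    rw [hδb']
    exact ciSup_le hupper
  have hbdda' : BddAbove (Set.range fun v : {v : H // v ∈ E ∧ ‖v‖ = 1} =>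
      ⨅ w : {w : H // w ∈ F ∧ ‖w‖ = 1}, ‖(v : H) - (w : H)‖) :=
    ⟨Real.sqrt A, by rintro x ⟨v, rfl⟩; exact hupper v⟩
  have hδb'0 : 0 ≤ δb' := by
    rw [hδb']
    refine le_trans ?_ (le_ciSup hbdda' v0)
    exact le_ciInf fun w => norm_nonneg _
  calc δb' ^ 2 ≤ Real.sqrt A ^ 2 := pow_le_pow_left₀ hδb'0 hδb'le 2
    _ = A := Real.sq_sqrt hA0
end

section
/- Let u₂, u₃ be orthonormal in a real inner product space, P the orthogonal projection onto a finite-dimensional subspace E^h, and suppose ‖uᵢ − Puᵢ‖ ≤ δ_b < 1/2 for i = 2,3. Define v₂ = Pu₂/s₂ with s₂ = ‖Pu₂‖, and v₃ = (Pu₃ − ⟨Pu₃, v₂⟩v₂)/s₃ with s₃ = ‖Pu₃ − ⟨Pu₃, v₂⟩v₂‖. Then (v₂, v₃) is an orthonormal pair in E^h and ‖uᵢ − vᵢ‖ ≤ 2δ_b(2 − δ_b)/(1 − 2δ_b) for i = 2,3. -/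
open scoped RealInnerProductSpace

/-- Gram–Schmidt orthonormalization of the projections of an orthonormal pair:
if `‖uᵢ − Puᵢ‖ ≤ δ_b < 1/2` then `(v₂, v₃)` is an orthonormal pair in `F` with
`‖uᵢ − vᵢ‖ ≤ 2δ_b(2 − δ_b)/(1 − 2δ_b)`. -/
theorem stmt_6 {H : Type*} [NormedAddCommGroup H] [InnerProductSpace ℝ H]
    (F : Submodule ℝ H) [FiniteDimensional ℝ F] (u₂ u₃ : H)
    (hu₂ : ‖u₂‖ = 1) (hu₃ : ‖u₃‖ = 1) (horth : ⟪u₂, u₃⟫ = 0)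
    (δb : ℝ) (hδb : δb < 1 / 2)
    (h2 : ‖u₂ - (Submodule.orthogonalProjectionOnto F u₂ : H)‖ ≤ δb)
    (h3 : ‖u₃ - (Submodule.orthogonalProjectionOnto F u₃ : H)‖ ≤ δb)
    (p₂ p₃ q₃ v₂ v₃ : H) (s₂ s₃ : ℝ)
    (hp₂ : p₂ = (Submodule.orthogonalProjectionOnto F u₂ : H))
    (hp₃ : p₃ = (Submodule.orthogonalProjectionOnto F u₃ : H))
    (hs₂ : s₂ = ‖p₂‖) (hv₂ : v₂ = s₂⁻¹ • p₂)
    (hq₃ : q₃ = p₃ - ⟪p₃, v₂⟫ • v₂)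
    (hs₃ : s₃ = ‖q₃‖) (hv₃ : v₃ = s₃⁻¹ • q₃) :
    ‖v₂‖ = 1 ∧ ‖v₃‖ = 1 ∧ ⟪v₂, v₃⟫ = 0 ∧ v₂ ∈ F ∧ v₃ ∈ F ∧
      ‖u₂ - v₂‖ ≤ 2 * δb * (2 - δb) / (1 - 2 * δb) ∧
      ‖u₃ - v₃‖ ≤ 2 * δb * (2 - δb) / (1 - 2 * δb) := by
  have hδ0 : 0 ≤ δb := le_trans (norm_nonneg _) h2
  have h2' : ‖u₂ - p₂‖ ≤ δb := by rw [hp₂]; exact h2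
  have h3' : ‖u₃ - p₃‖ ≤ δb := by rw [hp₃]; exact h3
  have hp₂F : p₂ ∈ F := hp₂ ▸ SetLike.coe_mem _
  have hp₃F : p₃ ∈ F := hp₃ ▸ SetLike.coe_mem _
  -- orthogonality of residuals to F
  have ha : ∀ w ∈ F, ⟪u₂ - p₂, w⟫ = 0 := by
    intro w hw
    have : u₂ - (Submodule.orthogonalProjectionOnto F u₂ : H) ∈ Fᗮ :=
      Submodule.sub_starProjection_mem_orthogonal (K := F) u₂
    rw [← hp₂] at this
    rw [real_inner_comm]
    exact this w hw
  have hb : ∀ w ∈ F, ⟪u₃ - p₃, w⟫ = 0 := by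
    intro w hw
    have : u₃ - (Submodule.orthogonalProjectionOnto F u₃ : H) ∈ Fᗮ :=
      Submodule.sub_starProjection_mem_orthogonal (K := F) u₃
    rw [← hp₃] at this
    rw [real_inner_comm]
    exact this w hw
  -- s₂ bounds
  have hs2lb : 1 - δb ≤ s₂ := by
    have := norm_sub_norm_le u₂ p₂
    rw [hu₂] at this
    rw [hs₂]; linarith
  have hs2pos : 0 < s₂ := by linarith
  have hδ1 : (0:ℝ) < 1 - δb := by linarith
  have hs2d : |s₂ - 1| ≤ δb := by
    have hh := abs_norm_sub_norm_le p₂ u₂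
    rw [hu₂, norm_sub_rev] at hh
    rw [hs₂]; exact le_trans hh h2'
  have hv2norm : ‖v₂‖ = 1 := by
    rw [hv₂, norm_smul, norm_inv, Real.norm_eq_abs, abs_of_pos hs2pos, ← hs₂,
      inv_mul_cancel₀ (ne_of_gt hs2pos)]
  have hv2F : v₂ ∈ F := hv₂ ▸ F.smul_mem _ hp₂F
  -- ‖u₂ - v₂‖ ≤ 2δb
  have hp2v2 : ‖p₂ - v₂‖ ≤ δb := by
    have e : p₂ - v₂ = (1 - s₂⁻¹) • p₂ := by
      rw [hv₂, sub_smul, one_smul]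
    rw [e, norm_smul, Real.norm_eq_abs, ← hs₂]
    have e2 : |1 - s₂⁻¹| * s₂ = |s₂ - 1| := by
      have h1 : s₂ - 1 = (1 - s₂⁻¹) * s₂ := by field_simp
      rw [h1, abs_mul, abs_of_pos hs2pos]
    rw [e2]; exact hs2d
  have huv2 : ‖u₂ - v₂‖ ≤ 2 * δb := by
    calc ‖u₂ - v₂‖ = ‖(u₂ - p₂) + (p₂ - v₂)‖ := by rw [sub_add_sub_cancel]
      _ ≤ ‖u₂ - p₂‖ + ‖p₂ - v₂‖ := norm_add_le _ _
      _ ≤ δb + δb := add_le_add h2' hp2v2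
      _ = 2 * δb := by ring
  -- key inner product identity: ⟪p₂, p₃⟫ = -⟪u₂-p₂, u₃-p₃⟫
  have hkey : ⟪p₂, p₃⟫ = -⟪u₂ - p₂, u₃ - p₃⟫ := by
    have e1 : ⟪u₂ - p₂, p₃⟫ = 0 := ha p₃ hp₃F
    have e2' : ⟪p₂, u₃ - p₃⟫ = 0 := by rw [real_inner_comm]; exact hb p₂ hp₂F
    have expand : ⟪(u₂ - p₂) + p₂, (u₃ - p₃) + p₃⟫
        = ⟪u₂ - p₂, u₃ - p₃⟫ + ⟪u₂ - p₂, p₃⟫ + ⟪p₂, u₃ - p₃⟫ + ⟪p₂, p₃⟫ := by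
      rw [inner_add_left, inner_add_right, inner_add_right]; ring
    rw [sub_add_cancel, sub_add_cancel] at expand
    rw [horth] at expand
    linarith
  have hkeybd : |⟪p₂, p₃⟫| ≤ δb * δb := by
    rw [hkey, abs_neg]
    calc |⟪u₂ - p₂, u₃ - p₃⟫| ≤ ‖u₂ - p₂‖ * ‖u₃ - p₃‖ := abs_real_inner_le_norm _ _
      _ ≤ δb * δb := mul_le_mul h2' h3' (norm_nonneg _) hδ0
  -- bound on ⟪p₃, v₂⟫
  have hcval : (⟪p₃, v₂⟫:ℝ) = s₂⁻¹ * ⟪p₂, p₃⟫ := by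
    rw [hv₂, real_inner_smul_right, real_inner_comm]
  have hcbd : |(⟪p₃, v₂⟫:ℝ)| ≤ δb * δb / (1 - δb) := by
    rw [hcval, abs_mul, abs_inv, abs_of_pos hs2pos]
    have h1 : s₂⁻¹ ≤ (1 - δb)⁻¹ := by
      apply inv_anti₀ hδ1 hs2lb
    calc s₂⁻¹ * |(⟪p₂, p₃⟫:ℝ)| ≤ (1 - δb)⁻¹ * (δb * δb) := by
          apply mul_le_mul h1 hkeybd (abs_nonneg _) (inv_nonneg.mpr (le_of_lt hδ1))
      _ = δb * δb / (1 - δb) := by ring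
  -- ‖u₃ - q₃‖ ≤ D where D = δb/(1-δb)
  have hDq : ‖u₃ - q₃‖ ≤ δb / (1 - δb) := by
    have e : u₃ - q₃ = (u₃ - p₃) + (⟪p₃, v₂⟫:ℝ) • v₂ := by rw [hq₃]; abel
    calc ‖u₃ - q₃‖ = ‖(u₃ - p₃) + (⟪p₃, v₂⟫:ℝ) • v₂‖ := by rw [e]
      _ ≤ ‖u₃ - p₃‖ + ‖(⟪p₃, v₂⟫:ℝ) • v₂‖ := norm_add_le _ _
      _ = ‖u₃ - p₃‖ + |(⟪p₃, v₂⟫:ℝ)| := by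
          rw [norm_smul, Real.norm_eq_abs, hv2norm, mul_one]
      _ ≤ δb + δb * δb / (1 - δb) := add_le_add h3' hcbd
      _ = δb / (1 - δb) := by field_simp; ring
  -- s₃ bounds
  have hDlt : δb / (1 - δb) < 1 := by
    rw [div_lt_one hδ1]; linarith
  have hs3lb : 1 - δb / (1 - δb) ≤ s₃ := by
    have := norm_sub_norm_le u₃ q₃
    rw [hu₃] at this
    rw [hs₃]; linarith
  have hs3pos : 0 < s₃ := by linarith
  have hs3d : |s₃ - 1| ≤ δb / (1 - δb) := by
    have hh := abs_norm_sub_norm_le q₃ u₃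
    rw [hu₃, norm_sub_rev] at hh
    rw [hs₃]; exact le_trans hh hDq
  have hv3norm : ‖v₃‖ = 1 := by
    rw [hv₃, norm_smul, norm_inv, Real.norm_eq_abs, abs_of_pos hs3pos, ← hs₃,
      inv_mul_cancel₀ (ne_of_gt hs3pos)]
  have hq3F : q₃ ∈ F := by
    rw [hq₃]; exact F.sub_mem hp₃F (F.smul_mem _ hv2F)
  have hv3F : v₃ ∈ F := hv₃ ▸ F.smul_mem _ hq3F
  -- orthogonality of v₂ and v₃
  have hv2v3 : ⟪v₂, v₃⟫ = 0 := by
    have hq : ⟪v₂, q₃⟫ = 0 := by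
      rw [hq₃, inner_sub_right, real_inner_smul_right, real_inner_self_eq_norm_sq,
        hv2norm, real_inner_comm p₃ v₂]
      ring
    rw [hv₃, real_inner_smul_right, hq, mul_zero]
  -- ‖u₃ - v₃‖ ≤ 2D
  have hq3v3 : ‖q₃ - v₃‖ ≤ δb / (1 - δb) := by
    have e : q₃ - v₃ = (1 - s₃⁻¹) • q₃ := by
      rw [hv₃, sub_smul, one_smul]
    rw [e, norm_smul, Real.norm_eq_abs, ← hs₃]
    have e2 : |1 - s₃⁻¹| * s₃ = |s₃ - 1| := by
      have h1 : s₃ - 1 = (1 - s₃⁻¹) * s₃ := by field_simp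
      rw [h1, abs_mul, abs_of_pos hs3pos]
    rw [e2]; exact hs3d
  have huv3 : ‖u₃ - v₃‖ ≤ 2 * (δb / (1 - δb)) := by
    calc ‖u₃ - v₃‖ = ‖(u₃ - q₃) + (q₃ - v₃)‖ := by rw [sub_add_sub_cancel]
      _ ≤ ‖u₃ - q₃‖ + ‖q₃ - v₃‖ := norm_add_le _ _
      _ ≤ δb / (1 - δb) + δb / (1 - δb) := add_le_add hDq hq3v3
      _ = 2 * (δb / (1 - δb)) := by ring
  -- final arithmetic comparisons
  have hden : (0:ℝ) < 1 - 2 * δb := by linarith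
  have final2 : 2 * δb ≤ 2 * δb * (2 - δb) / (1 - 2 * δb) := by
    rw [le_div_iff₀ hden]
    have hpos : (0:ℝ) ≤ δb * (1 + δb) := mul_nonneg hδ0 (by linarith)
    have he : 2 * δb * (2 - δb) - 2 * δb * (1 - 2 * δb) = 2 * (δb * (1 + δb)) := by
      ring
    linarith
  have final3 : 2 * (δb / (1 - δb)) ≤ 2 * δb * (2 - δb) / (1 - 2 * δb) := by
    rw [show 2 * (δb / (1 - δb)) = 2 * δb / (1 - δb) by ring,
      div_le_div_iff₀ hδ1 hden]
    have hpos : (0:ℝ) ≤ δb * (1 - δb + δb ^ 2) := by nlinarith [sq_nonneg δb]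
    have he : 2 * δb * (2 - δb) * (1 - δb) - 2 * δb * (1 - 2 * δb)
        = 2 * (δb * (1 - δb + δb ^ 2)) := by ring
    linarith
  refine ⟨hv2norm, hv3norm, hv2v3, hv2F, hv3F, le_trans huv2 final2, le_trans huv3 final3⟩
end

section
/- Let u₂, u₃ be orthonormal, P the orthogonal projection onto a finite-dimensional subspace, δ_b ≥ 0 with ‖uᵢ − Puᵢ‖ ≤ δ_b and δ_b < 1, and set v₂ = Pu₂/‖Pu₂‖. Then |⟨Pu₃, v₂⟩| ≤ δ_b²/(1 − δ_b). -/
open scoped RealInnerProductSpace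

/-- If `u₂, u₃` are orthonormal, `‖uᵢ − Puᵢ‖ ≤ δ_b < 1`, and `v₂ = Pu₂/‖Pu₂‖`,
then `|⟨Pu₃, v₂⟩| ≤ δ_b²/(1 − δ_b)`. -/
theorem stmt_7 {H : Type*} [NormedAddCommGroup H] [InnerProductSpace ℝ H]
    (F : Submodule ℝ H) [FiniteDimensional ℝ F] (u₂ u₃ : H)
    (hu₂ : ‖u₂‖ = 1) (hu₃ : ‖u₃‖ = 1) (horth : ⟪u₂, u₃⟫ = 0)
    (δb : ℝ) (hδb0 : 0 ≤ δb) (hδb : δb < 1)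
    (h2 : ‖u₂ - (Submodule.orthogonalProjectionOnto F u₂ : H)‖ ≤ δb)
    (h3 : ‖u₃ - (Submodule.orthogonalProjectionOnto F u₃ : H)‖ ≤ δb)
    (v₂ : H)
    (hv₂ : v₂ = ‖(Submodule.orthogonalProjectionOnto F u₂ : H)‖⁻¹ • (Submodule.orthogonalProjectionOnto F u₂ : H)) :
    |⟪(Submodule.orthogonalProjectionOnto F u₃ : H), v₂⟫| ≤ δb ^ 2 / (1 - δb) := by
  set p2 : H := (Submodule.orthogonalProjectionOnto F u₂ : H) with hp2
  set p3 : H := (Submodule.orthogonalProjectionOnto F u₃ : H) with hp3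
  have hA : ⟪u₂ - p2, p3⟫ = 0 :=
    F.starProjection_inner_eq_zero u₂ p3 (Submodule.orthogonalProjectionOnto F u₃).2
  have hB : ⟪u₃ - p3, p2⟫ = 0 :=
    F.starProjection_inner_eq_zero u₃ p2 (Submodule.orthogonalProjectionOnto F u₂).2
  have key : ⟪p3, p2⟫ = -⟪u₃ - p3, u₂ - p2⟫ := by
    have h1 : ⟪u₃ - p3, u₂ - p2⟫ = ⟪u₃, u₂⟫ - ⟪u₃, p2⟫ - ⟪p3, u₂⟫ + ⟪p3, p2⟫ := by
      simp [inner_sub_left, inner_sub_right]; ring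
    have h2' : ⟪u₃, p2⟫ = ⟪p3, p2⟫ := by
      have := hB; rw [inner_sub_left, sub_eq_zero] at this; exact this
    have h3' : ⟪p3, u₂⟫ = ⟪p3, p2⟫ := by
      have := hA; rw [real_inner_comm, inner_sub_right, sub_eq_zero] at this
      exact this
    have h4 : ⟪u₃, u₂⟫ = 0 := by rw [real_inner_comm]; exact horth
    rw [h1, h2', h3', h4]; ring
  have hbound : |⟪p3, p2⟫| ≤ δb ^ 2 := by
    rw [key, abs_neg]
    calc |⟪u₃ - p3, u₂ - p2⟫| ≤ ‖u₃ - p3‖ * ‖u₂ - p2‖ := abs_real_inner_le_norm _ _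
      _ ≤ δb * δb := mul_le_mul h3 h2 (norm_nonneg _) hδb0
      _ = δb ^ 2 := (sq δb).symm
  have hnorm : 1 - δb ≤ ‖p2‖ := by
    have := norm_sub_norm_le u₂ p2
    linarith [le_trans this h2, hu₂ ▸ this]
  have hpos : (0:ℝ) < 1 - δb := by linarith
  have hp2pos : (0:ℝ) < ‖p2‖ := lt_of_lt_of_le hpos hnorm
  rw [hv₂, real_inner_smul_right, abs_mul, abs_inv, abs_norm]
  rw [inv_mul_eq_div, div_le_div_iff₀ hp2pos hpos]
  nlinarith [hbound, hnorm, sq_nonneg δb, abs_nonneg (⟪p3, p2⟫)]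
end
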